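/- Let A : Ω × ℝⁿ → ℝⁿ satisfy |A(x,ξ)| ≤ ℓ (μ² + |ξ|²)^{(p-1)/2} and |D_x A(x,ξ)| ≤ g(x)(μ² + |ξ|²)^{(p-1)/2} with g ∈ Lⁿ_loc(Ω) (equivalently x ↦ A(x,ξ) ∈ W^{1,n}_loc uniformly in ξ with weight). Then A is locally uniformly in VMO: for each compact K ⊂ Ω, limsup_{R→0} sup_{r<R} sup_{x₀∈K} ⨍_{B_r(x₀)} V(x, B_r(x₀)) dx = 0, where V(x,B) = sup_{ξ≠0} |A(x,ξ) − A_B(ξ)| / (μ² + |ξ|²)^{(p-1)/2} and A_B(ξ) = ⨍_B A(y,ξ) dy. -/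

import Mathlib

open MeasureTheory Metric Filter
open scoped ENNReal NNReal Topology

/-- `V(x, B) = sup_{ξ ≠ 0} |A(x,ξ) − A_B(ξ)| / (μ² + |ξ|²)^{(p-1)/2}`, where
`A_B(ξ) = ⨍_B A(y,ξ) dy`. -/
noncomputable def oscV {n : ℕ} (p μ : ℝ)
    (A : EuclideanSpace ℝ (Fin n) → EuclideanSpace ℝ (Fin n) → EuclideanSpace ℝ (Fin n))
    (B : Set (EuclideanSpace ℝ (Fin n))) (x : EuclideanSpace ℝ (Fin n)) : ℝ :=
  ⨆ ξ : {ξ : EuclideanSpace ℝ (Fin n) // ξ ≠ 0},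
    ‖A x ξ.1 - ⨍ y in B, A y ξ.1‖ / (μ ^ 2 + ‖ξ.1‖ ^ 2) ^ ((p - 1) / 2)

lemma oscV_nonneg' {n : ℕ} (p μ : ℝ)
    (A : EuclideanSpace ℝ (Fin n) → EuclideanSpace ℝ (Fin n) → EuclideanSpace ℝ (Fin n))
    (B : Set (EuclideanSpace ℝ (Fin n))) (x : EuclideanSpace ℝ (Fin n)) :
    0 ≤ oscV p μ A B x :=
  Real.iSup_nonneg fun ξ => div_nonneg (norm_nonneg _)
    (Real.rpow_nonneg (by positivity) _)

lemma oscV_pointwise' {n : ℕ} (p μ : ℝ)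
    (A : EuclideanSpace ℝ (Fin n) → EuclideanSpace ℝ (Fin n) → EuclideanSpace ℝ (Fin n))
    (g : EuclideanSpace ℝ (Fin n) → ℝ) (hg0 : ∀ x, 0 ≤ g x)
    (x₀ : EuclideanSpace ℝ (Fin n)) (r : ℝ) (hr : 0 < r)
    (hgB : IntegrableOn g (ball x₀ r) volume)
    (hAB : ∀ ξ : EuclideanSpace ℝ (Fin n), IntegrableOn (fun y => A y ξ) (ball x₀ r) volume)
    (hsob' : ∀ x ∈ ball x₀ r, ∀ y ∈ ball x₀ r, ∀ ξ,
      ‖A x ξ - A y ξ‖ ≤ (g x + g y) * ‖x - y‖ * (μ ^ 2 + ‖ξ‖ ^ 2) ^ ((p - 1) / 2))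
    {x : EuclideanSpace ℝ (Fin n)} (hx : x ∈ ball x₀ r) :
    oscV p μ A (ball x₀ r) x ≤
      2 * r * (g x + (volume (ball x₀ r)).toReal⁻¹ * ∫ y in ball x₀ r, g y) := by
  set B := ball x₀ r with hB
  have hBm : MeasurableSet B := measurableSet_ball
  have ht0 : 0 < (volume B).toReal :=
    ENNReal.toReal_pos (measure_ball_pos volume x₀ hr).ne' measure_ball_lt_top.ne
  set t := (volume B).toReal with hts
  set I := ∫ y in B, g y with hIs
  have hI0 : 0 ≤ I := setIntegral_nonneg hBm fun y _ => hg0 y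
  have hRHS0 : 0 ≤ 2 * r * (g x + t⁻¹ * I) := by
    apply mul_nonneg (by positivity)
    exact add_nonneg (hg0 x) (mul_nonneg (inv_nonneg.2 ht0.le) hI0)
  rw [oscV]
  refine Real.iSup_le ?_ hRHS0
  rintro ⟨ξ, hξ⟩
  simp only
  set w := (μ ^ 2 + ‖ξ‖ ^ 2) ^ ((p - 1) / 2) with hws
  have hw : 0 < w := by
    have h1 : 0 < ‖ξ‖ := norm_pos_iff.2 hξ
    exact Real.rpow_pos_of_pos (by positivity) _
  rw [div_le_iff₀ hw]
  have hconst : IntegrableOn (fun _ => A x ξ) B volume :=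
    integrableOn_const measure_ball_lt_top.ne
  have key : A x ξ - ⨍ y in B, A y ξ = t⁻¹ • ∫ y in B, (A x ξ - A y ξ) := by
    rw [integral_sub hconst (hAB ξ), setAverage_eq, setIntegral_const, measureReal_def, ← hts, smul_sub, smul_smul,
      inv_mul_cancel₀ ht0.ne', one_smul]
  have hxy : ∀ y ∈ B, ‖x - y‖ ≤ 2 * r := by
    intro y hy
    have h1 : dist x x₀ < r := mem_ball.1 hx
    have h2 : dist y x₀ < r := mem_ball.1 hy
    have h3 : dist x y ≤ dist x x₀ + dist x₀ y := dist_triangle x x₀ y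
    rw [dist_comm x₀ y] at h3
    rw [← dist_eq_norm]
    linarith
  have hbound : ∀ y ∈ B, ‖A x ξ - A y ξ‖ ≤ (g x + g y) * (2 * r * w) := by
    intro y hy
    calc ‖A x ξ - A y ξ‖ ≤ (g x + g y) * ‖x - y‖ * w := hsob' x hx y hy ξ
      _ ≤ (g x + g y) * (2 * r) * w := by
          apply mul_le_mul_of_nonneg_right _ hw.le
          exact mul_le_mul_of_nonneg_left (hxy y hy) (add_nonneg (hg0 x) (hg0 y))
      _ = (g x + g y) * (2 * r * w) := by ring
  have hint1 : IntegrableOn (fun y => ‖A x ξ - A y ξ‖) B volume :=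
    (hconst.sub (hAB ξ)).norm
  have hint2 : IntegrableOn (fun y => (g x + g y) * (2 * r * w)) B volume :=
    ((integrableOn_const measure_ball_lt_top.ne).add hgB).mul_const _
  have hi2 : ∫ y in B, (g x + g y) * (2 * r * w) = (t * g x + I) * (2 * r * w) := by
    rw [integral_mul_const]
    congr 1
    rw [integral_add (integrableOn_const (C := g x) measure_ball_lt_top.ne) hgB,
      setIntegral_const, measureReal_def, ← hts, smul_eq_mul]
  calc ‖A x ξ - ⨍ y in B, A y ξ‖ = t⁻¹ * ‖∫ y in B, (A x ξ - A y ξ)‖ := by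
        rw [key, norm_smul, Real.norm_of_nonneg (inv_nonneg.2 ht0.le)]
    _ ≤ t⁻¹ * ∫ y in B, ‖A x ξ - A y ξ‖ := by
        apply mul_le_mul_of_nonneg_left (norm_integral_le_integral_norm _) (inv_nonneg.2 ht0.le)
    _ ≤ t⁻¹ * ∫ y in B, (g x + g y) * (2 * r * w) := by
        apply mul_le_mul_of_nonneg_left _ (inv_nonneg.2 ht0.le)
        exact setIntegral_mono_on hint1 hint2 hBm hbound
    _ = t⁻¹ * ((t * g x + I) * (2 * r * w)) := by rw [hi2]
    _ = 2 * r * (g x + t⁻¹ * I) * w := by field_simp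

lemma oscV_average' {n : ℕ} (p μ : ℝ)
    (A : EuclideanSpace ℝ (Fin n) → EuclideanSpace ℝ (Fin n) → EuclideanSpace ℝ (Fin n))
    (g : EuclideanSpace ℝ (Fin n) → ℝ) (hg0 : ∀ x, 0 ≤ g x)
    (x₀ : EuclideanSpace ℝ (Fin n)) (r : ℝ) (hr : 0 < r)
    (hgB : IntegrableOn g (ball x₀ r) volume)
    (hAB : ∀ ξ : EuclideanSpace ℝ (Fin n), IntegrableOn (fun y => A y ξ) (ball x₀ r) volume)
    (hsob' : ∀ x ∈ ball x₀ r, ∀ y ∈ ball x₀ r, ∀ ξ,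
      ‖A x ξ - A y ξ‖ ≤ (g x + g y) * ‖x - y‖ * (μ ^ 2 + ‖ξ‖ ^ 2) ^ ((p - 1) / 2)) :
    ⨍ x in ball x₀ r, oscV p μ A (ball x₀ r) x ≤
      4 * r * ((volume (ball x₀ r)).toReal⁻¹ * ∫ y in ball x₀ r, g y) := by
  set B := ball x₀ r with hB
  have hBm : MeasurableSet B := measurableSet_ball
  have ht0 : 0 < (volume B).toReal :=
    ENNReal.toReal_pos (measure_ball_pos volume x₀ hr).ne' measure_ball_lt_top.ne
  set t := (volume B).toReal with hts
  set I := ∫ y in B, g y with hIs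
  have hI0 : 0 ≤ I := setIntegral_nonneg hBm fun y _ => hg0 y
  have hF : IntegrableOn (fun x => 2 * r * (g x + t⁻¹ * I)) B volume :=
    ((hgB.add (integrableOn_const measure_ball_lt_top.ne)).const_mul (2 * r))
  have h1 : ∫ x in B, oscV p μ A B x ≤ ∫ x in B, 2 * r * (g x + t⁻¹ * I) := by
    apply integral_mono_of_nonneg (Eventually.of_forall fun x => oscV_nonneg' p μ A B x) hF
    exact (ae_restrict_iff' hBm).2 (Eventually.of_forall fun x hx =>
      oscV_pointwise' p μ A g hg0 x₀ r hr hgB hAB hsob' hx)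
  have h2 : ∫ x in B, 2 * r * (g x + t⁻¹ * I) = 2 * r * (I + t * (t⁻¹ * I)) := by
    rw [integral_const_mul]
    congr 1
    rw [integral_add hgB (integrableOn_const measure_ball_lt_top.ne),
      setIntegral_const, measureReal_def, ← hts, smul_eq_mul]
  rw [setAverage_eq, smul_eq_mul]
  calc t⁻¹ * ∫ x in B, oscV p μ A B x ≤ t⁻¹ * (2 * r * (I + t * (t⁻¹ * I))) := by
        rw [← h2]; exact mul_le_mul_of_nonneg_left h1 (inv_nonneg.2 ht0.le)
    _ = 4 * r * (t⁻¹ * I) := by field_simp; ring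

/-- Lemma 2.13: if `A` has `(p-1)`-growth and a Sobolev-type dependence on `x`
(expressed via the Hajlasz pointwise inequality with `g ∈ Lⁿ_loc(Ω)`), then
`x ↦ A(x,ξ)` is locally uniformly in `VMO`:
`limsup_{R→0} sup_{r<R} sup_{x₀∈K} ⨍_{B_r(x₀)} V(x, B_r(x₀)) dx = 0`
for every compact `K ⊆ Ω`. -/
theorem stmt13 (n : ℕ) (hn : 2 < n) (p μ ℓ : ℝ) (hp1 : 1 < p) (hp2 : p ≤ 2)
    (hμ0 : 0 ≤ μ) (hμ1 : μ ≤ 1) (hℓ : 0 < ℓ)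
    (Ω : Set (EuclideanSpace ℝ (Fin n))) (hΩ : IsOpen Ω)
    (hΩb : Bornology.IsBounded Ω)
    (A : EuclideanSpace ℝ (Fin n) → EuclideanSpace ℝ (Fin n) → EuclideanSpace ℝ (Fin n))
    (hmeas : ∀ ξ, Measurable fun x => A x ξ)
    (hcont : ∀ x, Continuous fun ξ => A x ξ)
    (hgrowth : ∀ x ∈ Ω, ∀ ξ, ‖A x ξ‖ ≤ ℓ * (μ ^ 2 + ‖ξ‖ ^ 2) ^ ((p - 1) / 2))
    (g : EuclideanSpace ℝ (Fin n) → ℝ) (hg0 : ∀ x, 0 ≤ g x) (hgm : Measurable g)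
    (hgloc : ∀ K ⊆ Ω, IsCompact K → IntegrableOn (fun x => g x ^ (n : ℝ)) K volume)
    (hsob : ∀ x ∈ Ω, ∀ y ∈ Ω, ∀ ξ,
      ‖A x ξ - A y ξ‖ ≤ (g x + g y) * ‖x - y‖ * (μ ^ 2 + ‖ξ‖ ^ 2) ^ ((p - 1) / 2)) :
    ∀ K ⊆ Ω, IsCompact K →
      Filter.limsup
        (fun R => ⨆ r ∈ Set.Ioo (0 : ℝ) R, ⨆ x₀ ∈ K,
          ⨍ x in ball x₀ r, oscV p μ A (ball x₀ r) x)
        (𝓝[>] (0 : ℝ)) = 0 := by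
  intro K hKΩ hKc
  haveI : Nonempty (Fin n) := ⟨⟨0, by omega⟩⟩
  have h1n : (1 : ℝ) < (n : ℝ) := by exact_mod_cast lt_trans one_lt_two hn
  have hn0 : (0 : ℝ) < (n : ℝ) := lt_trans one_pos h1n
  set F : ℝ → ℝ := fun R => ⨆ r ∈ Set.Ioo (0 : ℝ) R, ⨆ x₀ ∈ K,
    ⨍ x in ball x₀ r, oscV p μ A (ball x₀ r) x with hFdef
  have havg0 : ∀ (x₀ : EuclideanSpace ℝ (Fin n)) (r : ℝ),
      0 ≤ ⨍ x in ball x₀ r, oscV p μ A (ball x₀ r) x := by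
    intro x₀ r
    rw [setAverage_eq, smul_eq_mul]
    exact mul_nonneg (inv_nonneg.2 ENNReal.toReal_nonneg)
      (integral_nonneg fun x => oscV_nonneg' p μ A _ x)
  have hF0 : ∀ R, 0 ≤ F R := fun R =>
    Real.iSup_nonneg fun r => Real.iSup_nonneg fun _ =>
      Real.iSup_nonneg fun x₀ => Real.iSup_nonneg fun _ => havg0 x₀ r
  have hmain : ∀ ε > (0 : ℝ), ∀ᶠ R in 𝓝[>] (0 : ℝ), F R ≤ ε := by
    intro ε hε
    obtain ⟨δ, hδ0, hδΩ⟩ := hKc.exists_cthickening_subset_open hΩ hKΩ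
    set K' := Metric.cthickening δ K with hK'def
    have hK'c : IsCompact K' := hKc.cthickening
    have hgnK' : IntegrableOn (fun x => g x ^ (n : ℝ)) K' volume := hgloc K' hδΩ hK'c
    have hgK' : IntegrableOn g K' volume := by
      have hc1 : IntegrableOn (fun _ => (1 : ℝ)) K' volume :=
        integrableOn_const (hK'c.measure_lt_top : volume K' < ⊤).ne
      refine Integrable.mono' (hc1.add hgnK') hgm.aestronglyMeasurable.restrict
        (Eventually.of_forall fun x => ?_)
      rw [Real.norm_of_nonneg (hg0 x)]
      show g x ≤ 1 + g x ^ (n : ℝ)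
      rcases le_total (g x) 1 with h | h
      · have h2 : (0 : ℝ) ≤ g x ^ (n : ℝ) := Real.rpow_nonneg (hg0 x) _
        linarith
      · have h2 : g x ^ (1 : ℝ) ≤ g x ^ (n : ℝ) :=
          Real.rpow_le_rpow_of_exponent_le h h1n.le
        rw [Real.rpow_one] at h2
        linarith
    set v := (volume (ball (0 : EuclideanSpace ℝ (Fin n)) 1)).toReal with hvdef
    have hv0 : 0 < v :=
      ENNReal.toReal_pos (measure_ball_pos volume _ one_pos).ne' measure_ball_lt_top.ne
    set c := 4 * v ^ (-(n : ℝ)⁻¹) with hcdef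
    have hc0 : 0 < c := by positivity
    set ε₁ := (ε / c) ^ (n : ℝ) with hε₁def
    have hε₁0 : 0 < ε₁ := Real.rpow_pos_of_pos (div_pos hε hc0) _
    have hlint : ∫⁻ x, ENNReal.ofReal (g x ^ (n : ℝ)) ∂(volume.restrict K') ≠ ∞ := by
      have h2 := hgnK'.2
      rw [hasFiniteIntegral_iff_ofReal
        (Eventually.of_forall fun x => Real.rpow_nonneg (hg0 x) _)] at h2
      exact h2.ne
    obtain ⟨η, hη0, hη⟩ := exists_pos_setLIntegral_lt_of_measure_lt hlint
      (ε := ENNReal.ofReal ε₁) (ENNReal.ofReal_pos.2 hε₁0).ne'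
    obtain ⟨ρ, hρ0, hρ⟩ := ENNReal.exists_nnreal_pos_mul_lt
      ((measure_ball_lt_top : volume (ball (0 : EuclideanSpace ℝ (Fin n)) 1) < ⊤)).ne hη0.ne'
    set R₀ := min δ (min (ρ : ℝ) 1) with hR₀def
    have hR₀ : 0 < R₀ := lt_min hδ0 (lt_min (by exact_mod_cast hρ0) one_pos)
    have hev : Set.Ioo (0 : ℝ) R₀ ∈ 𝓝[>] (0 : ℝ) :=
      Ioo_mem_nhdsGT_of_mem ⟨le_refl 0, hR₀⟩
    filter_upwards [hev] with R hR
    refine Real.iSup_le (fun r => Real.iSup_le (fun hr => Real.iSup_le (fun x₀ =>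
      Real.iSup_le (fun hx₀ => ?_) hε.le) hε.le) hε.le) hε.le
    -- main estimate on the ball
    have hr0 : 0 < r := hr.1
    have hrR₀ : r < R₀ := hr.2.trans hR.2
    have hrδ : r ≤ δ := le_trans hrR₀.le (min_le_left _ _)
    have hrρ : r ≤ (ρ : ℝ) := le_trans hrR₀.le ((min_le_right _ _).trans (min_le_left _ _))
    have hr1 : r ≤ 1 := le_trans hrR₀.le ((min_le_right _ _).trans (min_le_right _ _))
    set B := ball x₀ r with hBdef
    have hBm : MeasurableSet B := measurableSet_ball
    have hBK' : B ⊆ K' :=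
      (ball_subset_closedBall.trans (closedBall_subset_closedBall hrδ)).trans
        (closedBall_subset_cthickening hx₀ δ)
    have hBΩ : B ⊆ Ω := hBK'.trans hδΩ
    have ht0 : 0 < (volume B).toReal :=
      ENNReal.toReal_pos (measure_ball_pos volume x₀ hr0).ne' measure_ball_lt_top.ne
    set t := (volume B).toReal with htdef
    set I := ∫ y in B, g y with hIdef
    set G := ∫ y in B, g y ^ (n : ℝ) with hGdef
    have hgB : IntegrableOn g B volume := hgK'.mono_set hBK'
    have hgnB : IntegrableOn (fun x => g x ^ (n : ℝ)) B volume := hgnK'.mono_set hBK'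
    have hI0 : 0 ≤ I := setIntegral_nonneg hBm fun y _ => hg0 y
    have hG0 : 0 ≤ G := setIntegral_nonneg hBm fun y _ => Real.rpow_nonneg (hg0 y) _
    have hAB : ∀ ξ : EuclideanSpace ℝ (Fin n), IntegrableOn (fun y => A y ξ) B volume := by
      intro ξ
      have hc2 : IntegrableOn
          (fun _ : EuclideanSpace ℝ (Fin n) => ℓ * (μ ^ 2 + ‖ξ‖ ^ 2) ^ ((p - 1) / 2)) B volume :=
        integrableOn_const measure_ball_lt_top.ne
      refine hc2.mono' ((hmeas ξ).aestronglyMeasurable.restrict) ?_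
      exact (ae_restrict_iff' hBm).2 (Eventually.of_forall fun y hy => hgrowth y (hBΩ hy) ξ)
    have havg : ⨍ x in B, oscV p μ A B x ≤ 4 * r * (t⁻¹ * I) :=
      oscV_average' p μ A g hg0 x₀ r hr0 hgB hAB
        (fun x hx y hy ξ => hsob x (hBΩ hx) y (hBΩ hy) ξ)
    -- volume of the ball
    have hvol : volume B = ENNReal.ofReal (r ^ n) * volume (ball (0 : EuclideanSpace ℝ (Fin n)) 1) := by
      rw [hBdef, Measure.addHaar_ball volume x₀ hr0.le, finrank_euclideanSpace_fin]
    have ht : t = r ^ n * v := by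
      rw [htdef, hvol, ENNReal.toReal_mul, ENNReal.toReal_ofReal (by positivity), hvdef]
    -- smallness of the integral of gⁿ on B
    have hsmall : (volume.restrict K') B < η := by
      calc (volume.restrict K') B ≤ volume B := by
            rw [Measure.restrict_apply hBm]; exact measure_mono Set.inter_subset_left
        _ ≤ ENNReal.ofReal r * volume (ball (0 : EuclideanSpace ℝ (Fin n)) 1) := by
            rw [hvol]
            gcongr
            calc r ^ n ≤ r ^ 1 := pow_le_pow_of_le_one hr0.le hr1 (by omega)
              _ = r := pow_one r
        _ ≤ (ρ : ℝ≥0∞) * volume (ball (0 : EuclideanSpace ℝ (Fin n)) 1) := by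
            gcongr
            rw [← ENNReal.ofReal_coe_nnreal]
            exact ENNReal.ofReal_le_ofReal hrρ
        _ < η := hρ
    have hGle : G ≤ ε₁ := by
      have hmeasp : Measurable fun x => g x ^ (n : ℝ) :=
        (Real.continuous_rpow_const hn0.le).measurable.comp hgm
      have hres : (volume.restrict K').restrict B = volume.restrict B := by
        rw [Measure.restrict_restrict hBm, Set.inter_eq_self_of_subset_left hBK']
      rw [hGdef, ← hres, integral_eq_lintegral_of_nonneg_ae
        (Eventually.of_forall fun x => Real.rpow_nonneg (hg0 x) _)
        hmeasp.aestronglyMeasurable.restrict]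
      exact ENNReal.toReal_le_of_le_ofReal hε₁0.le (hη B hsmall).le
    -- Hölder
    have hpq : (n : ℝ).HolderConjugate ((n : ℝ) / ((n : ℝ) - 1)) :=
      Real.HolderConjugate.conjExponent h1n
    have hholder : I ≤ G ^ (1 / (n : ℝ)) * t ^ (1 / ((n : ℝ) / ((n : ℝ) - 1))) := by
      haveI : IsFiniteMeasure (volume.restrict B) :=
        ⟨by simpa [hBdef] using measure_ball_lt_top (x := x₀) (r := r)⟩
      have hgmem : MemLp g (ENNReal.ofReal (n : ℝ)) (volume.restrict B) := by
        have hne0 : ENNReal.ofReal (n : ℝ) ≠ 0 := by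
          simp only [ne_eq, ENNReal.ofReal_eq_zero, not_le]; positivity
        have hnetop : ENNReal.ofReal (n : ℝ) ≠ ∞ := ENNReal.ofReal_ne_top
        rw [← memLp_norm_rpow_iff (hgm.aestronglyMeasurable.restrict) hne0 hnetop,
          ENNReal.div_self hne0 hnetop, memLp_one_iff_integrable]
        have heq : (fun x => ‖g x‖ ^ (ENNReal.ofReal (n : ℝ)).toReal)
            = fun x => g x ^ (n : ℝ) := by
          funext x
          rw [Real.norm_of_nonneg (hg0 x), ENNReal.toReal_ofReal (by positivity)]
        rw [heq]; exact hgnB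
      have h1mem : MemLp (fun _ => (1 : ℝ))
          (ENNReal.ofReal ((n : ℝ) / ((n : ℝ) - 1))) (volume.restrict B) := memLp_const 1
      have hH := integral_mul_le_Lp_mul_Lq_of_nonneg hpq
        (Eventually.of_forall fun x => hg0 x) (Eventually.of_forall fun _ => zero_le_one)
        hgmem h1mem
      simpa [Real.one_rpow, Measure.restrict_apply_univ, htdef, hIdef, hGdef, measureReal_def] using hH
    -- rpow algebra
    have hq : 1 / ((n : ℝ) / ((n : ℝ) - 1)) = 1 - (n : ℝ)⁻¹ := by field_simp
    have hkey : t⁻¹ * t ^ (1 / ((n : ℝ) / ((n : ℝ) - 1))) = r⁻¹ * v ^ (-(n : ℝ)⁻¹) := by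
      have htpos : (0 : ℝ) < t := ht0
      rw [hq, show t⁻¹ = t ^ (-(1 : ℝ)) by rw [Real.rpow_neg_one], ← Real.rpow_add htpos,
        show (-1 : ℝ) + (1 - (n : ℝ)⁻¹) = -(n : ℝ)⁻¹ by ring, ht,
        Real.mul_rpow (by positivity) hv0.le]
      congr 1
      rw [← Real.rpow_natCast r n, ← Real.rpow_mul hr0.le, mul_neg,
        mul_inv_cancel₀ (by positivity : (n : ℝ) ≠ 0), Real.rpow_neg_one]
    calc ⨍ x in B, oscV p μ A B x ≤ 4 * r * (t⁻¹ * I) := havg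
      _ ≤ 4 * r * (t⁻¹ * (G ^ (1 / (n : ℝ)) * t ^ (1 / ((n : ℝ) / ((n : ℝ) - 1))))) := by
          have h4 : (0 : ℝ) ≤ 4 * r := by positivity
          exact mul_le_mul_of_nonneg_left
            (mul_le_mul_of_nonneg_left hholder (inv_nonneg.2 ht0.le)) h4
      _ = 4 * v ^ (-(n : ℝ)⁻¹) * G ^ (1 / (n : ℝ)) := by
          rw [show t⁻¹ * (G ^ (1 / (n : ℝ)) * t ^ (1 / ((n : ℝ) / ((n : ℝ) - 1))))
            = (t⁻¹ * t ^ (1 / ((n : ℝ) / ((n : ℝ) - 1)))) * G ^ (1 / (n : ℝ)) by ring, hkey]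
          field_simp
      _ ≤ 4 * v ^ (-(n : ℝ)⁻¹) * ε₁ ^ (1 / (n : ℝ)) := by
          have h4 : (0 : ℝ) ≤ 4 * v ^ (-(n : ℝ)⁻¹) := by positivity
          exact mul_le_mul_of_nonneg_left
            (Real.rpow_le_rpow hG0 hGle (by positivity)) h4
      _ = ε := by
          have hcc : 4 * v ^ (-(n : ℝ)⁻¹) = c := hcdef.symm
          rw [hε₁def, ← Real.rpow_mul (div_pos hε hc0).le, mul_one_div,
            div_self (ne_of_gt hn0), Real.rpow_one, hcc, mul_comm c,
            div_mul_cancel₀ _ hc0.ne']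
  -- conclude the limsup computation
  rw [Filter.limsup_eq]
  have hS : ∀ a ∈ {a : ℝ | ∀ᶠ R in 𝓝[>] (0 : ℝ), F R ≤ a}, 0 ≤ a := by
    intro a ha
    have ha' : ∀ᶠ R in 𝓝[>] (0 : ℝ), F R ≤ a := ha
    by_contra hcon
    push_neg at hcon
    obtain ⟨R, hR1, hR2⟩ := (ha'.and (Eventually.of_forall hF0)).exists
    linarith
  apply le_antisymm
  · have hbdd : BddBelow {a : ℝ | ∀ᶠ R in 𝓝[>] (0 : ℝ), F R ≤ a} := ⟨0, hS⟩
    refine le_of_forall_pos_le_add fun ε hε => ?_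
    simpa using csInf_le hbdd (hmain ε hε)
  · exact le_csInf ⟨1, hmain 1 one_pos⟩ hS
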